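/- Let u ∈ ℕ, q ∈ (1/u, 1), and let P be a permutation matrix such that every u×z binary matrix (z ≥ u) with at least qz 1-entries in every row contains P, i.e., f_P(z, qz) < h for all z ≥ u with h = u. Then f_P(u², u) ≤ u^⌈−log u / log q⌉. -/
import Mathlib


open Asymptotics

noncomputable section
set_option maxRecDepth 8000

/-- Number of 1-entries of a binary matrix. -/
def ones {n m : ℕ} (A : Fin n → Fin m → Bool) : ℕ :=
  Nat.card {p : Fin n × Fin m // A p.1 p.2 = true}

/-- Number of 0-entries of a binary matrix. -/
def zeros {n m : ℕ} (A : Fin n → Fin m → Bool) : ℕ :=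
  Nat.card {p : Fin n × Fin m // A p.1 p.2 = false}

/-- `B` is contained in `A`: `B` can be obtained from `A` by deleting rows/columns
and turning some 1-entries into 0-entries. -/
def containsB {a b n m : ℕ} (B : Fin a → Fin b → Bool) (A : Fin n → Fin m → Bool) : Prop :=
  ∃ f : Fin a → Fin n, ∃ g : Fin b → Fin m, StrictMono f ∧ StrictMono g ∧
    ∀ i j, B i j = true → A (f i) (g j) = true

/-- The permutation matrix of a permutation `σ`. -/
def permMat {k : ℕ} (σ : Equiv.Perm (Fin k)) : Fin k → Fin k → Bool :=
  fun i j => decide (σ i = j)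

/-- `A` contains the permutation matrix of `σ`. -/
def containsP {k n m : ℕ} (σ : Equiv.Perm (Fin k)) (A : Fin n → Fin m → Bool) : Prop :=
  containsB (permMat σ) A

/-- `ex(n,P)`: the maximum number of 1-entries in an `n × n` binary matrix avoiding
the permutation matrix of `σ`. -/
def exP {k : ℕ} (n : ℕ) (σ : Equiv.Perm (Fin k)) : ℕ :=
  sSup {c : ℕ | ∃ A : Fin n → Fin n → Bool, ¬ containsP σ A ∧ c = ones A}

/-- `f_P(z,y)`: the maximum number of rows of a binary `P`-avoiding matrix with `z` columns
and at least `y` 1-entries in every row. -/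
def fP {k : ℕ} (σ : Equiv.Perm (Fin k)) (z : ℕ) (y : ℝ) : ℕ :=
  sSup {h : ℕ | ∃ A : Fin h → Fin z → Bool, ¬ containsP σ A ∧
    ∀ i : Fin h, y ≤ (Nat.card {j : Fin z // A i j = true} : ℝ)}

namespace Stmt5Aux

/-- The set whose `sSup` is `fP`. -/
def Sset {k : ℕ} (σ : Equiv.Perm (Fin k)) (z : ℕ) (y : ℝ) : Set ℕ :=
  {h : ℕ | ∃ A : Fin h → Fin z → Bool, ¬ containsP σ A ∧
    ∀ i : Fin h, y ≤ (Nat.card {j : Fin z // A i j = true} : ℝ)}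

lemma fP_eq {k : ℕ} (σ : Equiv.Perm (Fin k)) (z : ℕ) (y : ℝ) :
    fP σ z y = sSup (Sset σ z y) := rfl

lemma containsP_of_map {k n m n' m' : ℕ} (σ : Equiv.Perm (Fin k))
    {A : Fin n → Fin m → Bool} {A' : Fin n' → Fin m' → Bool}
    (F : Fin n' → Fin n) (G : Fin m' → Fin m)
    (hF : StrictMono F) (hG : StrictMono G)
    (hent : ∀ i j, A' i j = true → A (F i) (G j) = true) :
    containsP σ A' → containsP σ A := by
  rintro ⟨f, g, hf, hg, he⟩
  exact ⟨F ∘ f, G ∘ g, hF.comp hf, hG.comp hg, fun i j hb => hent _ _ (he i j hb)⟩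

/-- Pad a matrix with extra zero columns on the right. -/
def padM {n z : ℕ} (Z : ℕ) (A : Fin n → Fin z → Bool) : Fin n → Fin Z → Bool :=
  fun i j => if hj : (j : ℕ) < z then A i ⟨j, hj⟩ else false

lemma containsP_padM {k n z Z : ℕ} (σ : Equiv.Perm (Fin k)) (A : Fin n → Fin z → Bool) :
    containsP σ (padM Z A) → containsP σ A := by
  rintro ⟨f, g, hf, hg, he⟩
  have hlt : ∀ j : Fin k, ((g j : ℕ)) < z := by
    intro j
    have h1 : permMat σ (σ.symm j) j = true := by simp [permMat]
    have h2 := he (σ.symm j) j h1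
    by_contra hc
    have h2' : (if hj : ((g j : ℕ)) < z then A (f (σ.symm j)) ⟨(g j : ℕ), hj⟩
        else false) = true := h2
    rw [dif_neg hc] at h2'
    exact Bool.false_ne_true h2'
  refine ⟨f, fun j => ⟨g j, hlt j⟩, hf, ?_, ?_⟩
  · intro a b hab
    exact hg hab
  · intro i j hb
    have h2 := he i j hb
    simpa [padM, hlt j] using h2

lemma Sset_mono_pad {k : ℕ} (σ : Equiv.Perm (Fin k)) {z Z : ℕ} {y y' : ℝ}
    (hzZ : z ≤ Z) (hy : y' ≤ y) {n : ℕ}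
    (hn : n ∈ Sset σ z y) : n ∈ Sset σ Z y' := by
  obtain ⟨A, hA, hc⟩ := hn
  refine ⟨padM Z A, fun hcon => hA (containsP_padM σ A hcon), fun i => ?_⟩
  refine le_trans hy (le_trans (hc i) (Nat.cast_le.mpr ?_))
  refine Nat.card_le_card_of_injective
    (fun c => ⟨Fin.castLE hzZ c.1, ?_⟩) ?_
  · have : ((Fin.castLE hzZ c.1 : Fin Z) : ℕ) < z := c.1.2
    simp only [padM, this, dif_pos]
    have : (⟨((Fin.castLE hzZ c.1 : Fin Z) : ℕ), this⟩ : Fin z) = c.1 := by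
      ext; simp
    rw [this]; exact c.2
  · intro a b hab
    have : (a.1 : ℕ) = (b.1 : ℕ) := congrArg (fun x => ((x : {j : Fin Z // padM Z A i j = true}).1 : ℕ)) hab
    exact Subtype.ext (Fin.ext this)

/-- OR-contraction of consecutive row blocks preserves avoidance. -/
lemma containsP_or {k n z L u' : ℕ} (σ : Equiv.Perm (Fin k))
    (A : Fin n → Fin z → Bool) (M : Fin u' → Fin z → Bool)
    (hM : ∀ s j, M s j = true →
      ∃ i : Fin n, (s : ℕ) * L ≤ (i : ℕ) ∧ (i : ℕ) < (s : ℕ) * L + L ∧ A i j = true) :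
    containsP σ M → containsP σ A := by
  rintro ⟨f, g, hf, hg, he⟩
  have hM' : ∀ i : Fin k, ∃ r : Fin n, (f i : ℕ) * L ≤ (r : ℕ) ∧
      (r : ℕ) < (f i : ℕ) * L + L ∧ A r (g (σ i)) = true :=
    fun i => hM (f i) (g (σ i)) (he i (σ i) (by simp [permMat]))
  choose F hF1 hF2 hF3 using hM'
  refine ⟨F, g, ?_, hg, ?_⟩
  · intro a b hab
    have hfa : (f a : ℕ) < (f b : ℕ) := hf hab
    have h1 : ((f a : ℕ) + 1) * L ≤ (f b : ℕ) * L := Nat.mul_le_mul_right L hfa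
    have h1' : (f a : ℕ) * L + L ≤ (f b : ℕ) * L := by rw [add_one_mul] at h1; exact h1
    have : (F a : ℕ) < (F b : ℕ) := by
      have h2 := hF2 a
      have h3 := hF1 b
      omega
    exact this
  · intro i j hb
    have hj : σ i = j := of_decide_eq_true hb
    subst hj
    exact hF3 i

section Main

variable {k : ℕ} (σ : Equiv.Perm (Fin k)) (u : ℕ) (q : ℝ)

/-- The base case: if `q z ≤ u` then any avoiding matrix with `z` columns and
at least `u` ones in every row has fewer than `u` rows. -/
lemma base (hu2 : 2 ≤ u) (hq0 : 0 < q) (hq1 : 1 / (u : ℝ) < q) (hq2 : q < 1)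
    (h1 : ∀ z : ℕ, u ≤ z → fP σ z (q * z) < u)
    (hB : BddAbove (Sset σ (u ^ 2) (u : ℝ))) :
    ∀ z : ℕ, q * z ≤ u → ∀ n (A : Fin n → Fin z → Bool), ¬ containsP σ A →
      (∀ r : Fin n, (u : ℝ) ≤ (Nat.card {j : Fin z // A r j = true} : ℝ)) →
      n ≤ u - 1 := by
  intro z hz n A hA hcnt
  have hu0 : (0 : ℝ) < u := by positivity
  set z' := ⌊(u : ℝ) / q⌋₊ with hz'def
  have hz'1 : (z' : ℝ) ≤ (u : ℝ) / q := Nat.floor_le (by positivity)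
  have hz'2 : (u : ℝ) / q - 1 < (z' : ℝ) := Nat.sub_one_lt_floor _
  have huz' : u ≤ z' := Nat.le_floor (by
    rw [le_div_iff₀ hq0]; nlinarith)
  have hz'u2 : z' ≤ u ^ 2 := by
    have hlt : (u : ℝ) / q < (u ^ 2 : ℕ) := by
      rw [div_lt_iff₀ hq0]
      push_cast
      have h1u : 1 < q * u := by
        rw [div_lt_iff₀ hu0] at hq1
        linarith
      nlinarith
    have := (Nat.floor_lt (by positivity)).mpr hlt
    omega
  have hzz' : z ≤ z' := Nat.le_floor (by
    rw [le_div_iff₀ hq0]; linarith [hz])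
  have hqz' : q * (z' : ℝ) ≤ u := by
    calc q * (z' : ℝ) ≤ q * ((u : ℝ) / q) := by nlinarith
      _ = u := by field_simp
  have hmem : n ∈ Sset σ z' (q * z') :=
    Sset_mono_pad σ hzz' hqz' ⟨A, hA, hcnt⟩
  by_cases hb : BddAbove (Sset σ z' (q * z'))
  · have hle := le_csSup hb hmem
    have hlt := h1 z' huz'
    rw [fP_eq] at hlt
    omega
  · exfalso
    have hsub : Sset σ z' (q * z') ⊆ Sset σ (u ^ 2) (u : ℝ) := by
      intro m hm
      obtain ⟨A', hA', hc'⟩ := hm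
      have hcnt' : ∀ r : Fin m, (u : ℝ) ≤ (Nat.card {j : Fin z' // A' r j = true} : ℝ) := by
        intro r
        have h := hc' r
        have hgt : (u : ℝ) - 1 < (Nat.card {j : Fin z' // A' r j = true} : ℝ) := by
          have hmul : q * ((u : ℝ) / q - 1) < q * (z' : ℝ) :=
            mul_lt_mul_of_pos_left hz'2 hq0
          have hqq : q * ((u : ℝ) / q) = u := by field_simp
          have hexp : q * ((u : ℝ) / q - 1) = (u : ℝ) - q := by
            rw [mul_sub, hqq, mul_one]
          have : (u : ℝ) - 1 < q * (z' : ℝ) := by linarith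
          linarith
        have hnat : u - 1 < Nat.card {j : Fin z' // A' r j = true} := by
          have : ((u - 1 : ℕ) : ℝ) < (Nat.card {j : Fin z' // A' r j = true} : ℝ) := by
            push_cast [Nat.cast_sub (by omega : 1 ≤ u)]
            linarith
          exact_mod_cast this
        have : u ≤ Nat.card {j : Fin z' // A' r j = true} := by omega
        exact_mod_cast this
      exact Sset_mono_pad σ hz'u2 (le_refl _) ⟨A', hA', hcnt'⟩
    exact hb (BddAbove.mono hsub hB)

/-- The main induction. -/
lemma main (hu2 : 2 ≤ u) (hq0 : 0 < q) (hq1 : 1 / (u : ℝ) < q) (hq2 : q < 1)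
    (h1 : ∀ z : ℕ, u ≤ z → fP σ z (q * z) < u)
    (hB : BddAbove (Sset σ (u ^ 2) (u : ℝ))) :
    ∀ t z, z ≤ u ^ 2 → q ^ (t + 1) * z ≤ u →
      ∀ n (A : Fin n → Fin z → Bool), ¬ containsP σ A →
      (∀ r : Fin n, (u : ℝ) ≤ (Nat.card {j : Fin z // A r j = true} : ℝ)) →
      n ≤ u ^ (t + 1) - 1 := by
  intro t
  induction t with
  | zero =>
    intro z hzu2 hqz n A hA hc
    simp only [zero_add, pow_one] at hqz ⊢
    exact base σ u q hu2 hq0 hq1 hq2 h1 hB z hqz n A hA hc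
  | succ t ih =>
    intro z hzu2 hqz n A hA hc
    have hqz2 : q ^ (t + 2) * z ≤ u := hqz
    show n ≤ u ^ (t + 2) - 1
    by_cases hcase : q * z ≤ u
    · have hb := base σ u q hu2 hq0 hq1 hq2 h1 hB z hcase n A hA hc
      have : u ≤ u ^ (t + 2) := Nat.le_self_pow (by omega) u
      omega
    · push_neg at hcase
      by_contra hcon
      push_neg at hcon
      have hupos : 1 ≤ u ^ (t + 2) := Nat.one_le_pow _ _ (by omega)
      have hn : u ^ (t + 2) ≤ n := by omega
      set L := u ^ (t + 1) with hLdef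
      have hL : 1 ≤ L := Nat.one_le_pow _ _ (by omega)
      -- Every interval of `L` consecutive rows has column support of size ≥ q z.
      have claim : ∀ a : ℕ, a + L ≤ n →
          (q * z : ℝ) ≤ (Nat.card {j : Fin z //
            ∃ r : Fin n, a ≤ (r : ℕ) ∧ (r : ℕ) < a + L ∧ A r j = true} : ℝ) := by
        intro a ha
        by_contra hlt
        push_neg at hlt
        classical
        set T := {j : Fin z // ∃ r : Fin n, a ≤ (r : ℕ) ∧ (r : ℕ) < a + L ∧ A r j = true}
          with hTdef
        set z₁ := Nat.card T with hz₁def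
        have hcardT : Fintype.card T = z₁ := by
          rw [hz₁def, Nat.card_eq_fintype_card]
        let e : Fin z₁ ≃o T := Fintype.orderIsoFinOfCardEq T hcardT
        have hrow : ∀ r : Fin L, a + (r : ℕ) < n := by
          intro r; have := r.2; omega
        let rowF : Fin L → Fin n := fun r => ⟨a + (r : ℕ), hrow r⟩
        let A' : Fin L → Fin z₁ → Bool := fun r j => A (rowF r) (e j).1
        have hA' : ¬ containsP σ A' := by
          intro hcp
          refine hA (containsP_of_map σ rowF (fun j => (e j).1) ?_ ?_ (fun _ _ h => h) hcp)
          · intro a' b' hab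
            simp only [rowF, Fin.lt_def]
            have : (a' : ℕ) < (b' : ℕ) := hab
            omega
          · intro a' b' hab
            have h1 : e a' < e b' := e.strictMono hab
            exact h1
        have hcnt' : ∀ r : Fin L,
            (u : ℝ) ≤ (Nat.card {j : Fin z₁ // A' r j = true} : ℝ) := by
          intro r
          refine le_trans (hc (rowF r)) (Nat.cast_le.mpr ?_)
          have hrle : a ≤ ((rowF r : Fin n) : ℕ) := by
            show a ≤ a + (r : ℕ); omega
          have hrlt : ((rowF r : Fin n) : ℕ) < a + L := by
            show a + (r : ℕ) < a + L
            have := r.2; omega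
          refine Nat.card_le_card_of_injective
            (fun c => (⟨e.symm ⟨c.1, ⟨rowF r, hrle, hrlt, c.2⟩⟩, ?_⟩ :
              {j : Fin z₁ // A' r j = true})) ?_
          · show A (rowF r) ((e (e.symm _)).1) = true
            rw [OrderIso.apply_symm_apply]
            exact c.2
          · intro c₁ c₂ hcc
            have h2 := e.symm.injective (Subtype.ext_iff.mp hcc)
            exact Subtype.ext (congrArg (fun (x : T) => (x.1 : Fin z)) h2)
        have hz₁z : z₁ ≤ z := by
          have h := Nat.card_le_card_of_injective (Subtype.val : T → Fin z)
            Subtype.val_injective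
          rwa [Nat.card_eq_fintype_card (α := Fin z), Fintype.card_fin] at h
        have hq' : q ^ (t + 1) * (z₁ : ℕ) ≤ u := by
          calc q ^ (t + 1) * (z₁ : ℝ) ≤ q ^ (t + 1) * (q * z) := by
                have hp : (0 : ℝ) < q ^ (t + 1) := by positivity
                nlinarith
            _ = q ^ (t + 2) * z := by ring
            _ ≤ u := hqz2
        have hfin := ih z₁ (le_trans hz₁z hzu2) hq' L A' hA' hcnt'
        omega
      -- The OR-contraction matrix with `u` rows.
      let M : Fin u → Fin z → Bool := fun s j =>
        decide (∃ r : Fin n, (s : ℕ) * L ≤ (r : ℕ) ∧ (r : ℕ) < (s : ℕ) * L + L ∧ A r j = true)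
      have hM : ¬ containsP σ M := by
        intro hcp
        exact hA (containsP_or σ A M (fun s j hj => of_decide_eq_true hj) hcp)
      have hMc : ∀ s : Fin u, (q * z : ℝ) ≤ (Nat.card {j : Fin z // M s j = true} : ℝ) := by
        intro s
        have hs1 : (s : ℕ) + 1 ≤ u := s.2
        have hsL : (s : ℕ) * L + L ≤ n := by
          have h1 : ((s : ℕ) + 1) * L ≤ u * L := Nat.mul_le_mul_right L hs1
          have h0 : ((s : ℕ) + 1) * L = (s : ℕ) * L + L := add_one_mul _ _
          have h2 : u * L = u ^ (t + 2) := by rw [hLdef]; exact (pow_succ' u (t + 1)).symm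
          omega
        have hcl := claim ((s : ℕ) * L) hsL
        refine le_trans hcl (le_of_eq ?_)
        congr 1
        exact Nat.card_congr (Equiv.subtypeEquivRight (by
          intro j
          simp only [M, decide_eq_true_eq]))
      have hmem : u ∈ Sset σ z (q * z) := ⟨M, hM, hMc⟩
      have huz : u ≤ z := by
        have hqzz : q * (z : ℝ) ≤ z := by nlinarith [Nat.cast_nonneg (α := ℝ) z]
        have : (u : ℝ) < z := lt_of_lt_of_le hcase hqzz
        exact_mod_cast this.le
      by_cases hb : BddAbove (Sset σ z (q * z))
      · have hle := le_csSup hb hmem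
        have hlt := h1 z huz
        rw [fP_eq] at hlt
        omega
      · have hsub : Sset σ z (q * z) ⊆ Sset σ (u ^ 2) (u : ℝ) :=
          fun m hm => Sset_mono_pad σ hzu2 hcase.le hm
        exact hb (BddAbove.mono hsub hB)

end Main

end Stmt5Aux

open Stmt5Aux in
/-- If `f_P(z,qz) < u` for all `z ≥ u`, then `f_P(u², u) ≤ u^⌈-log u / log q⌉`. -/
theorem stmt5 {k : ℕ} (σ : Equiv.Perm (Fin k)) (u : ℕ) (hu : 1 ≤ u) (q : ℝ)
    (hq1 : 1 / (u : ℝ) < q) (hq2 : q < 1)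
    (h1 : ∀ z : ℕ, u ≤ z → fP σ z (q * z) < u) :
    fP σ (u ^ 2) (u : ℝ) ≤ u ^ ⌈-(Real.log u / Real.log q)⌉₊ := by
  classical
  have hu2 : 2 ≤ u := by
    by_contra hcon
    have : u = 1 := by omega
    subst this
    simp at hq1
    linarith
  have hu0 : (0 : ℝ) < u := by positivity
  have hq0 : 0 < q := lt_trans (by positivity) hq1
  set i := ⌈-(Real.log u / Real.log q)⌉₊ with hidef
  have hlogq : Real.log q < 0 := Real.log_neg hq0 hq2
  have hlogu : 0 < Real.log u := Real.log_pos (by exact_mod_cast hu2)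
  have hxpos : 0 < -(Real.log u / Real.log q) := by
    have : Real.log u / Real.log q < 0 := div_neg_of_pos_of_neg hlogu hlogq
    linarith
  have hipos : 1 ≤ i := by
    rw [hidef, Nat.one_le_ceil_iff]
    exact hxpos
  have hqi : q ^ i * (u : ℝ) ≤ 1 := by
    have hle : -(Real.log u / Real.log q) ≤ (i : ℝ) := Nat.le_ceil _
    have h2 : (i : ℝ) * Real.log q ≤ -Real.log u := by
      have := mul_le_mul_of_nonpos_right hle hlogq.le
      rw [neg_mul, div_mul_cancel₀ _ (ne_of_lt hlogq)] at this
      linarith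
    have h3 : Real.log (q ^ i) ≤ Real.log (1 / (u : ℝ)) := by
      rw [Real.log_pow, Real.log_div one_ne_zero (ne_of_gt hu0), Real.log_one]
      push_cast
      linarith
    have h4 : q ^ i ≤ 1 / (u : ℝ) :=
      (Real.log_le_log_iff (by positivity) (by positivity)).mp h3
    rw [← le_div_iff₀ hu0]
    linarith [h4]
  by_cases hB : BddAbove (Sset σ (u ^ 2) (u : ℝ))
  · have hq' : q ^ ((i - 1) + 1) * ((u ^ 2 : ℕ) : ℝ) ≤ u := by
      have hi1 : (i - 1) + 1 = i := by omega
      rw [hi1]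
      push_cast
      have : q ^ i * ((u : ℝ) * u) ≤ 1 * u := by
        have := mul_le_mul_of_nonneg_right hqi (le_of_lt hu0)
        calc q ^ i * ((u : ℝ) * u) = q ^ i * (u : ℝ) * u := by ring
          _ ≤ 1 * u := this
      calc q ^ i * ((u : ℝ) ^ 2) = q ^ i * ((u : ℝ) * u) := by ring
        _ ≤ 1 * u := this
        _ = u := one_mul _
    have key := main σ u q hu2 hq0 hq1 hq2 h1 hB (i - 1) (u ^ 2) (le_refl _) hq'
    rw [fP_eq]
    refine csSup_le' ?_
    intro m hm
    obtain ⟨A, hA, hc⟩ := hm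
    have := key m A hA hc
    have hi1 : (i - 1) + 1 = i := by omega
    rw [hi1] at this
    have : m ≤ u ^ i - 1 := this
    have hup : 1 ≤ u ^ i := Nat.one_le_pow _ _ (by omega)
    omega
  · rw [fP_eq, csSup_of_not_bddAbove hB]
    simp
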